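/- Let γ and γ_i (i ≥ 1) be ℝ^k-valued measures on [0,T] such that (γ_i, |γ_i|) ⇀* (γ, λ) for some finite nonnegative Borel measure λ on [0,T]. Then there exists a Borel set ℰ ⊆ [0,T] containing T, with [0,T] ∖ ℰ at most countable, such that for every integer n ≥ 1 and every continuous function Ψ : [0,T] → ℝ^{n×k} one has lim_i ∫_{[0,t]} Ψ(s)·γ_i(ds) = ∫_{[0,t]} Ψ(s)·γ(ds) for all t ∈ ℰ. (ℰ can be taken to consist of T together with all t with λ({t}) = 0.) -/

import Mathlib

open MeasureTheory Set Filter Topology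

noncomputable section

/-- Integral of a scalar function against a signed measure
(via its Jordan decomposition). -/
def sInt (γ : SignedMeasure ℝ) (B : Set ℝ) (φ : ℝ → ℝ) : ℝ :=
  (∫ t in B, φ t ∂γ.toJordanDecomposition.posPart) -
    ∫ t in B, φ t ∂γ.toJordanDecomposition.negPart

/-- Total-variation measure `|γ| = Σ_j (γ^j₊ + γ^j₋)` of an ℝᵏ-valued measure. -/
def tvm {k : ℕ} (γ : Fin k → SignedMeasure ℝ) : Measure ℝ := ∑ j, (γ j).totalVariation

namespace PrimConvAux

lemma totalVariation_finite (ν : SignedMeasure ℝ) : IsFiniteMeasure ν.totalVariation := by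
  haveI := ν.toJordanDecomposition.posPart_finite
  haveI := ν.toJordanDecomposition.negPart_finite
  rw [SignedMeasure.totalVariation]
  infer_instance

lemma tvm_finite {k : ℕ} (g : Fin k → SignedMeasure ℝ) : IsFiniteMeasure (tvm g) := by
  constructor
  rw [tvm, Measure.finset_sum_apply]
  refine ENNReal.sum_lt_top.mpr fun j _ => ?_
  haveI := totalVariation_finite (g j)
  exact measure_lt_top _ _

lemma le_tvm {k : ℕ} (g : Fin k → SignedMeasure ℝ) (j : Fin k) (A : Set ℝ) :
    (g j).totalVariation A ≤ tvm g A := by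
  rw [tvm, Measure.finset_sum_apply]
  exact Finset.single_le_sum (f := fun i => (g i).totalVariation A)
    (fun i _ => zero_le) (Finset.mem_univ j)

lemma myIntegrableOn {μ : Measure ℝ} [IsFiniteMeasure μ] {f : ℝ → ℝ} {A B : Set ℝ}
    (hAB : A ⊆ B) (hBm : MeasurableSet B) (hBc : IsCompact B) (hf : ContinuousOn f B) :
    IntegrableOn f A μ := by
  obtain ⟨C, hC⟩ := hBc.exists_bound_of_continuousOn hf
  have hm : AEStronglyMeasurable f (μ.restrict A) :=
    (hf.aestronglyMeasurable hBm).mono_measure (Measure.restrict_mono hAB le_rfl)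
  refine Integrable.mono' (integrable_const C) hm ?_
  have hmem : ∀ᵐ x ∂μ.restrict A, x ∈ B :=
    (ae_restrict_mem hBm).filter_mono
      (ae_mono (Measure.restrict_mono hAB le_rfl))
  filter_upwards [hmem] with x hx
  exact hC x hx

lemma abs_sInt_le (ν : SignedMeasure ℝ) {A : Set ℝ} (hA : MeasurableSet A) {f : ℝ → ℝ} {C : ℝ}
    (hC : ∀ x ∈ A, |f x| ≤ C) :
    |sInt ν A f| ≤ C * (ν.totalVariation A).toReal := by
  haveI := ν.toJordanDecomposition.posPart_finite
  haveI := ν.toJordanDecomposition.negPart_finite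
  have hC' : ∀ x ∈ A, ‖f x‖ ≤ C := fun x hx => by
    rw [Real.norm_eq_abs]; exact hC x hx
  have h1 := norm_setIntegral_le_of_norm_le_const (μ := ν.toJordanDecomposition.posPart)
    (f := f) (measure_lt_top _ A) hC'
  have h2 := norm_setIntegral_le_of_norm_le_const (μ := ν.toJordanDecomposition.negPart)
    (f := f) (measure_lt_top _ A) hC'
  have htv : ν.totalVariation A =
      ν.toJordanDecomposition.posPart A + ν.toJordanDecomposition.negPart A := by
    rw [SignedMeasure.totalVariation, Measure.add_apply]
  rw [sInt, htv, ENNReal.toReal_add (measure_ne_top _ _) (measure_ne_top _ _), mul_add]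
  calc |(∫ t in A, f t ∂ν.toJordanDecomposition.posPart) -
        ∫ t in A, f t ∂ν.toJordanDecomposition.negPart|
      ≤ ‖∫ t in A, f t ∂ν.toJordanDecomposition.posPart‖ +
        ‖∫ t in A, f t ∂ν.toJordanDecomposition.negPart‖ := by
        rw [← Real.norm_eq_abs]; exact norm_sub_le _ _
    _ ≤ C * (ν.toJordanDecomposition.posPart A).toReal +
        C * (ν.toJordanDecomposition.negPart A).toReal := add_le_add h1 h2

lemma setIntegral_cutoff_split (μ : Measure ℝ) [IsFiniteMeasure μ] {T t δ : ℝ} (ht0 : 0 ≤ t)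
    (hδ : 0 < δ) (hδT : t + δ ≤ T) {φ χ : ℝ → ℝ} (hφ : ContinuousOn φ (Icc 0 T))
    (hχ : Continuous χ) (hχ1 : ∀ s ≤ t, χ s = 1) (hχ0 : ∀ s, t + δ ≤ s → χ s = 0) :
    ∫ s in Icc 0 T, φ s * χ s ∂μ =
      (∫ s in Icc 0 t, φ s ∂μ) + ∫ s in Ioc t (t + δ), φ s * χ s ∂μ := by
  have hψ : ContinuousOn (fun s => φ s * χ s) (Icc 0 T) := hφ.mul hχ.continuousOn
  have hsub1 : Icc (0:ℝ) t ⊆ Icc 0 T := Icc_subset_Icc le_rfl (by linarith)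
  have hsub2 : Ioc t (t + δ) ⊆ Icc (0:ℝ) T := fun x hx => ⟨by linarith [hx.1], by linarith [hx.2]⟩
  have hsub12 : Icc (0:ℝ) (t + δ) ⊆ Icc 0 T := Icc_subset_Icc le_rfl hδT
  have hsub3 : Ioc (t + δ) T ⊆ Icc (0:ℝ) T := fun x hx => ⟨by linarith [hx.1], hx.2⟩
  have i1 : IntegrableOn (fun s => φ s * χ s) (Icc 0 t) μ :=
    myIntegrableOn hsub1 measurableSet_Icc isCompact_Icc hψ
  have i2 : IntegrableOn (fun s => φ s * χ s) (Ioc t (t + δ)) μ :=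
    myIntegrableOn hsub2 measurableSet_Icc isCompact_Icc hψ
  have i12 : IntegrableOn (fun s => φ s * χ s) (Icc 0 (t + δ)) μ :=
    myIntegrableOn hsub12 measurableSet_Icc isCompact_Icc hψ
  have i3 : IntegrableOn (fun s => φ s * χ s) (Ioc (t + δ) T) μ :=
    myIntegrableOn hsub3 measurableSet_Icc isCompact_Icc hψ
  have e1 : Icc (0:ℝ) T = Icc 0 (t + δ) ∪ Ioc (t + δ) T :=
    (Icc_union_Ioc_eq_Icc (by linarith) hδT).symm
  have e2 : Icc (0:ℝ) (t + δ) = Icc 0 t ∪ Ioc t (t + δ) :=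
    (Icc_union_Ioc_eq_Icc ht0 (by linarith)).symm
  have d1 : Disjoint (Icc (0:ℝ) (t + δ)) (Ioc (t + δ) T) := by
    rw [Set.disjoint_left]
    intro x hx hx'
    exact absurd hx.2 (not_le.mpr hx'.1)
  have d2 : Disjoint (Icc (0:ℝ) t) (Ioc t (t + δ)) := by
    rw [Set.disjoint_left]
    intro x hx hx'
    exact absurd hx.2 (not_le.mpr hx'.1)
  have z3 : ∫ s in Ioc (t + δ) T, φ s * χ s ∂μ = 0 :=
    setIntegral_eq_zero_of_forall_eq_zero fun x hx => by rw [hχ0 x hx.1.le, mul_zero]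
  have c1 : ∫ s in Icc 0 t, φ s * χ s ∂μ = ∫ s in Icc 0 t, φ s ∂μ :=
    setIntegral_congr_fun measurableSet_Icc fun x hx => by rw [hχ1 x hx.2, mul_one]
  rw [e1, setIntegral_union d1 measurableSet_Ioc i12 i3, z3, add_zero, e2,
    setIntegral_union d2 measurableSet_Ioc i1 i2, c1]

lemma key_estimate (ν : SignedMeasure ℝ) {T t δ C : ℝ} (ht0 : 0 ≤ t) (hδ : 0 < δ)
    (hδT : t + δ ≤ T) {φ χ : ℝ → ℝ} (hφ : ContinuousOn φ (Icc 0 T)) (hχ : Continuous χ)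
    (hχ1 : ∀ s ≤ t, χ s = 1) (hχ0 : ∀ s, t + δ ≤ s → χ s = 0) (hχabs : ∀ s, |χ s| ≤ 1)
    (hC : ∀ x ∈ Icc 0 T, |φ x| ≤ C) :
    |sInt ν (Icc 0 T) (fun s => φ s * χ s) - sInt ν (Icc 0 t) φ| ≤
      C * (ν.totalVariation (Ioc t (t + δ))).toReal := by
  haveI := ν.toJordanDecomposition.posPart_finite
  haveI := ν.toJordanDecomposition.negPart_finite
  have hpos := setIntegral_cutoff_split ν.toJordanDecomposition.posPart ht0 hδ hδT hφ hχ hχ1 hχ0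
  have hneg := setIntegral_cutoff_split ν.toJordanDecomposition.negPart ht0 hδ hδT hφ hχ hχ1 hχ0
  have hdiff : sInt ν (Icc 0 T) (fun s => φ s * χ s) - sInt ν (Icc 0 t) φ =
      sInt ν (Ioc t (t + δ)) (fun s => φ s * χ s) := by
    simp only [sInt, hpos, hneg]; ring
  rw [hdiff]
  refine abs_sInt_le ν measurableSet_Ioc fun x hx => ?_
  have hxT : x ∈ Icc (0:ℝ) T := ⟨by linarith [hx.1], by linarith [hx.2]⟩
  calc |φ x * χ x| = |φ x| * |χ x| := abs_mul _ _
    _ ≤ C * 1 := mul_le_mul (hC x hxT) (hχabs x) (abs_nonneg _)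
        ((abs_nonneg (φ x)).trans (hC x hxT))
    _ = C := mul_one C

/-- The core per-component convergence result. -/
lemma conv_at {T : ℝ} (hT : 0 < T) {k : ℕ}
    {γi : ℕ → Fin k → SignedMeasure ℝ} {γ : Fin k → SignedMeasure ℝ}
    {lam : Measure ℝ} (hlamfin : IsFiniteMeasure lam)
    (hγconv : ∀ j, ∀ φ : ℝ → ℝ, ContinuousOn φ (Icc 0 T) →
      Tendsto (fun i => sInt (γi i j) (Icc 0 T) φ) atTop
        (nhds (sInt (γ j) (Icc 0 T) φ)))
    (htvconv : ∀ φ : ℝ → ℝ, ContinuousOn φ (Icc 0 T) →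
      Tendsto (fun i => ∫ t in Icc 0 T, φ t ∂(tvm (γi i))) atTop
        (nhds (∫ t in Icc 0 T, φ t ∂lam)))
    {t : ℝ} (ht : t ∈ Icc 0 T) (hcase : t = T ∨ lam {t} = 0)
    (j : Fin k) (φ : ℝ → ℝ) (hφ : ContinuousOn φ (Icc 0 T)) :
    Tendsto (fun i => sInt (γi i j) (Icc 0 t) φ) atTop
      (nhds (sInt (γ j) (Icc 0 t) φ)) := by
  haveI := hlamfin
  by_cases htT : t = T
  · subst htT; exact hγconv j φ hφ
  have hlt : t < T := lt_of_le_of_ne ht.2 htT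
  have hlam0 : lam {t} = 0 := hcase.resolve_left htT
  have ht0 : 0 ≤ t := ht.1
  haveI htvγ : IsFiniteMeasure (γ j).totalVariation := totalVariation_finite (γ j)
  -- bound for φ
  obtain ⟨C0, hC0⟩ := isCompact_Icc.exists_bound_of_continuousOn hφ
  set C : ℝ := max C0 0 with hCdef
  have hCnn : 0 ≤ C := le_max_right _ _
  have hC : ∀ x ∈ Icc (0:ℝ) T, |φ x| ≤ C := fun x hx => by
    rw [← Real.norm_eq_abs]; exact (hC0 x hx).trans (le_max_left _ _)
  rw [Metric.tendsto_atTop]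
  intro ε hε
  set η : ℝ := ε / (3 * C + 2) with hηdef
  have hη : 0 < η := div_pos hε (by linarith)
  -- choose δ
  set u : ℕ → ℝ := fun m => (T - t) / (m + 1) with hu
  have hupos : ∀ m, 0 < u m := by
    intro m
    apply div_pos (by linarith)
    positivity
  have huT : ∀ m, t + u m ≤ T := by
    intro m
    have h0 : (0:ℝ) ≤ (m:ℝ) := Nat.cast_nonneg m
    have h1 : (1:ℝ) ≤ (m:ℝ) + 1 := by linarith
    have := div_le_self (by linarith : (0:ℝ) ≤ T - t) h1
    simp only [hu]
    linarith [this]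
  have hu0 : Tendsto u atTop (nhds 0) := by
    have h := tendsto_const_div_atTop_nhds_zero_nat (T - t)
    have h2 := h.comp (tendsto_add_atTop_nat 1)
    refine h2.congr fun m => ?_
    simp only [hu, Function.comp]
    push_cast
    ring_nf
  have hAnti : Antitone u := by
    intro a b hab
    refine div_le_div_of_nonneg_left (by linarith) (by positivity) ?_
    have : (a:ℝ) ≤ b := Nat.cast_le.mpr hab
    linarith
  -- lam of Icc (t - u m) (t + 2 u m) tends to lam {t} = 0
  have hInter1 : (⋂ m, Icc (t - u m) (t + 2 * u m)) = {t} := by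
    ext x
    simp only [mem_iInter, mem_Icc, mem_singleton_iff]
    constructor
    · intro h
      have hx1 : t ≤ x := by
        have htend : Tendsto (fun m : ℕ => t - u m) atTop (nhds t) := by
          simpa using tendsto_const_nhds.sub hu0
        exact le_of_tendsto' htend fun m => (h m).1
      have hx2 : x ≤ t := by
        have htend : Tendsto (fun m : ℕ => t + 2 * u m) atTop (nhds t) := by
          simpa using tendsto_const_nhds.add (hu0.const_mul 2)
        exact ge_of_tendsto' htend fun m => (h m).2
      linarith
    · intro h m
      have := hupos m
      subst h
      constructor <;> linarith
  have hInter2 : (⋂ m, Ioc t (t + u m)) = (∅ : Set ℝ) := by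
    ext x
    simp only [mem_iInter, mem_Ioc, mem_empty_iff_false, iff_false, not_forall]
    by_contra hcon
    push_neg at hcon
    have hx2 : x ≤ t := by
      have htend : Tendsto (fun m : ℕ => t + u m) atTop (nhds t) := by
        simpa using tendsto_const_nhds.add hu0
      exact ge_of_tendsto' htend fun m => (hcon m).2
    exact absurd hx2 (not_le.mpr (hcon 0).1)
  have hmono1 : Antitone fun m => Icc (t - u m) (t + 2 * u m) := by
    intro a b hab
    have := hAnti hab
    exact Icc_subset_Icc (by linarith) (by linarith)
  have hmono2 : Antitone fun m => Ioc t (t + u m) := by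
    intro a b hab
    have := hAnti hab
    exact Ioc_subset_Ioc le_rfl (by linarith)
  have htend1 : Tendsto (fun m => lam (Icc (t - u m) (t + 2 * u m))) atTop (nhds 0) := by
    have := tendsto_measure_iInter_atTop (μ := lam)
      (s := fun m => Icc (t - u m) (t + 2 * u m))
      (fun m => measurableSet_Icc.nullMeasurableSet) hmono1 ⟨0, measure_ne_top lam _⟩
    rw [hInter1, hlam0] at this
    exact this
  have htend2 : Tendsto (fun m => (γ j).totalVariation (Ioc t (t + u m))) atTop (nhds 0) := by
    have := tendsto_measure_iInter_atTop (μ := (γ j).totalVariation)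
      (s := fun m => Ioc t (t + u m))
      (fun m => measurableSet_Ioc.nullMeasurableSet) hmono2 ⟨0, measure_ne_top _ _⟩
    rw [hInter2, measure_empty] at this
    exact this
  have hofη : (0 : ENNReal) < ENNReal.ofReal η := ENNReal.ofReal_pos.mpr hη
  obtain ⟨m, hm1, hm2⟩ :=
    ((htend1.eventually_lt_const hofη).and (htend2.eventually_lt_const hofη)).exists
  set δ : ℝ := u m with hδdef
  have hδ : 0 < δ := hupos m
  have hδT : t + δ ≤ T := huT m
  -- cutoff functions
  set χ : ℝ → ℝ := fun s => max 0 (min 1 ((t + δ - s) / δ)) with hχdef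
  have hχcont : Continuous χ :=
    continuous_const.max (continuous_const.min ((continuous_const.sub continuous_id).div_const δ))
  have hχ1 : ∀ s ≤ t, χ s = 1 := by
    intro s hs
    have h1 : (1:ℝ) ≤ (t + δ - s) / δ := (one_le_div hδ).mpr (by linarith)
    simp only [hχdef]
    rw [min_eq_left h1, max_eq_right zero_le_one]
  have hχ0 : ∀ s, t + δ ≤ s → χ s = 0 := by
    intro s hs
    have h1 : (t + δ - s) / δ ≤ 0 := div_nonpos_iff.mpr (Or.inr ⟨by linarith, hδ.le⟩)
    simp only [hχdef]
    exact max_eq_left ((min_le_right _ _).trans h1)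
  have hχabs : ∀ s, |χ s| ≤ 1 := by
    intro s
    rw [abs_le]
    constructor
    · have : (0:ℝ) ≤ χ s := le_max_left _ _
      linarith
    · exact max_le zero_le_one (min_le_left _ _)
  set ρ : ℝ → ℝ := fun s => max 0 (min 1 (min ((s - (t - δ)) / δ) ((t + 2 * δ - s) / δ)))
    with hρdef
  have hρcont : Continuous ρ := by
    apply continuous_const.max
    apply continuous_const.min
    exact ((continuous_id.sub continuous_const).div_const δ).min
      ((continuous_const.sub continuous_id).div_const δ)
  have hρ0 : ∀ s, 0 ≤ ρ s := fun s => le_max_left _ _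
  have hρle1 : ∀ s, ρ s ≤ 1 := fun s => max_le zero_le_one (min_le_left _ _)
  have hρone : ∀ s ∈ Icc t (t + δ), ρ s = 1 := by
    intro s hs
    have h1 : (1:ℝ) ≤ (s - (t - δ)) / δ := (one_le_div hδ).mpr (by linarith [hs.1])
    have h2 : (1:ℝ) ≤ (t + 2 * δ - s) / δ := (one_le_div hδ).mpr (by linarith [hs.2])
    simp only [hρdef]
    rw [min_eq_left (le_min h1 h2), max_eq_right zero_le_one]
  have hρzero : ∀ s, s ∉ Icc (t - δ) (t + 2 * δ) → ρ s = 0 := by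
    intro s hs
    rw [mem_Icc, not_and_or] at hs
    simp only [hρdef]
    rcases hs with hs | hs
    · push_neg at hs
      have h1 : (s - (t - δ)) / δ ≤ 0 := div_nonpos_iff.mpr (Or.inr ⟨by linarith, hδ.le⟩)
      exact max_eq_left ((min_le_right _ _).trans ((min_le_left _ _).trans h1))
    · push_neg at hs
      have h1 : (t + 2 * δ - s) / δ ≤ 0 := div_nonpos_iff.mpr (Or.inr ⟨by linarith, hδ.le⟩)
      exact max_eq_left ((min_le_right _ _).trans ((min_le_right _ _).trans h1))
  -- the modified integrand
  have hψcont : ContinuousOn (fun s => φ s * χ s) (Icc 0 T) := hφ.mul hχcont.continuousOn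
  have hGi := hγconv j (fun s => φ s * χ s) hψcont
  have hHi := htvconv ρ hρcont.continuousOn
  -- bound on the limit H
  set H : ℝ := ∫ s in Icc (0:ℝ) T, ρ s ∂lam with hHdef
  have hρintlam : Integrable ρ lam := by
    refine Integrable.mono' (integrable_const 1) hρcont.aestronglyMeasurable ?_
    filter_upwards with x
    rw [Real.norm_eq_abs, abs_of_nonneg (hρ0 x)]
    exact hρle1 x
  have hHle : H < η := by
    have step1 : H ≤ ∫ s, ρ s ∂lam := by
      rw [← setIntegral_univ (f := ρ) (μ := lam)]
      exact setIntegral_mono_set hρintlam.integrableOn (Eventually.of_forall hρ0)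
        ((subset_univ _).eventuallyLE)
    have step2 : ∫ s, ρ s ∂lam =
        (∫ s in Icc (t - δ) (t + 2 * δ), ρ s ∂lam) +
          ∫ s in (Icc (t - δ) (t + 2 * δ))ᶜ, ρ s ∂lam :=
      (integral_add_compl measurableSet_Icc hρintlam).symm
    have step3 : ∫ s in (Icc (t - δ) (t + 2 * δ))ᶜ, ρ s ∂lam = 0 :=
      setIntegral_eq_zero_of_forall_eq_zero fun x hx => hρzero x hx
    have step4 : ∫ s in Icc (t - δ) (t + 2 * δ), ρ s ∂lam ≤
        ∫ _s in Icc (t - δ) (t + 2 * δ), (1:ℝ) ∂lam :=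
      setIntegral_mono_on hρintlam.integrableOn
        (integrableOn_const (measure_ne_top _ _)) measurableSet_Icc
        fun x _ => hρle1 x
    have step5 : ∫ _s in Icc (t - δ) (t + 2 * δ), (1:ℝ) ∂lam =
        (lam (Icc (t - δ) (t + 2 * δ))).toReal := by
      rw [setIntegral_const, smul_eq_mul, mul_one, measureReal_def]
    have step6 : (lam (Icc (t - δ) (t + 2 * δ))).toReal < η :=
      ENNReal.toReal_lt_of_lt_ofReal hm1
    calc H ≤ ∫ s, ρ s ∂lam := step1
      _ = _ := step2
      _ < η := by rw [step3, add_zero, ← step5] at *; linarith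
  -- key per-i estimates
  have hkey_i : ∀ i, |sInt (γi i j) (Icc 0 T) (fun s => φ s * χ s) -
      sInt (γi i j) (Icc 0 t) φ| ≤ C * ((γi i j).totalVariation (Ioc t (t + δ))).toReal :=
    fun i => key_estimate (γi i j) ht0 hδ hδT hφ hχcont hχ1 hχ0 hχabs hC
  have hkey_γ : |sInt (γ j) (Icc 0 T) (fun s => φ s * χ s) -
      sInt (γ j) (Icc 0 t) φ| ≤ C * ((γ j).totalVariation (Ioc t (t + δ))).toReal :=
    key_estimate (γ j) ht0 hδ hδT hφ hχcont hχ1 hχ0 hχabs hC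
  have hγsmall : ((γ j).totalVariation (Ioc t (t + δ))).toReal < η :=
    ENNReal.toReal_lt_of_lt_ofReal hm2
  -- total variation of γi controlled by ∫ ρ d(tvm γi)
  have htv_le : ∀ i, ((γi i j).totalVariation (Ioc t (t + δ))).toReal ≤
      ∫ s in Icc (0:ℝ) T, ρ s ∂(tvm (γi i)) := by
    intro i
    haveI : IsFiniteMeasure (tvm (γi i)) := tvm_finite _
    haveI : IsFiniteMeasure ((γi i j).totalVariation) := totalVariation_finite _
    have hsub : Ioc t (t + δ) ⊆ Icc (0:ℝ) T := fun x hx =>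
      ⟨by linarith [hx.1], by linarith [hx.2]⟩
    have hρint : Integrable ρ (tvm (γi i)) := by
      refine Integrable.mono' (integrable_const 1) hρcont.aestronglyMeasurable ?_
      filter_upwards with x
      rw [Real.norm_eq_abs, abs_of_nonneg (hρ0 x)]
      exact hρle1 x
    have m1 : ((γi i j).totalVariation (Ioc t (t + δ))).toReal ≤
        ((tvm (γi i)) (Ioc t (t + δ))).toReal :=
      ENNReal.toReal_mono (measure_ne_top _ _) (le_tvm (γi i) j _)
    have m2 : ((tvm (γi i)) (Ioc t (t + δ))).toReal =
        ∫ _s in Ioc t (t + δ), (1:ℝ) ∂(tvm (γi i)) := by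
      rw [setIntegral_const, smul_eq_mul, mul_one, measureReal_def]
    have m3 : ∫ _s in Ioc t (t + δ), (1:ℝ) ∂(tvm (γi i)) ≤
        ∫ s in Ioc t (t + δ), ρ s ∂(tvm (γi i)) :=
      setIntegral_mono_on (integrableOn_const (measure_ne_top _ _))
        hρint.integrableOn measurableSet_Ioc
        fun x hx => (hρone x ⟨hx.1.le, hx.2⟩).symm.le
    have m4 : ∫ s in Ioc t (t + δ), ρ s ∂(tvm (γi i)) ≤
        ∫ s in Icc (0:ℝ) T, ρ s ∂(tvm (γi i)) :=
      setIntegral_mono_set hρint.integrableOn (Eventually.of_forall hρ0)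
        hsub.eventuallyLE
    linarith [m1, m2 ▸ m1, m3, m4]
  -- put everything together
  obtain ⟨N1, hN1⟩ := Metric.tendsto_atTop.mp hGi η hη
  obtain ⟨N2, hN2⟩ := Metric.tendsto_atTop.mp hHi η hη
  refine ⟨max N1 N2, fun i hi => ?_⟩
  have hi1 := hN1 i (le_of_max_le_left hi)
  have hi2 := hN2 i (le_of_max_le_right hi)
  rw [Real.dist_eq] at hi1 hi2 ⊢
  have hHi_le : ∫ s in Icc (0:ℝ) T, ρ s ∂(tvm (γi i)) ≤ H + η := by
    have := abs_lt.mp hi2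
    linarith [this.2]
  have b1 : |sInt (γi i j) (Icc 0 t) φ - sInt (γi i j) (Icc 0 T) (fun s => φ s * χ s)| ≤
      C * (H + η) := by
    rw [abs_sub_comm]
    refine (hkey_i i).trans ?_
    exact mul_le_mul_of_nonneg_left ((htv_le i).trans hHi_le) hCnn
  have b3 : |sInt (γ j) (Icc 0 T) (fun s => φ s * χ s) - sInt (γ j) (Icc 0 t) φ| ≤ C * η :=
    hkey_γ.trans (mul_le_mul_of_nonneg_left hγsmall.le hCnn)
  have hsplit : sInt (γi i j) (Icc 0 t) φ - sInt (γ j) (Icc 0 t) φ =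
      (sInt (γi i j) (Icc 0 t) φ - sInt (γi i j) (Icc 0 T) (fun s => φ s * χ s)) +
      (sInt (γi i j) (Icc 0 T) (fun s => φ s * χ s) -
        sInt (γ j) (Icc 0 T) (fun s => φ s * χ s)) +
      (sInt (γ j) (Icc 0 T) (fun s => φ s * χ s) - sInt (γ j) (Icc 0 t) φ) := by ring
  have habs : |sInt (γi i j) (Icc 0 t) φ - sInt (γ j) (Icc 0 t) φ| ≤
      C * (H + η) + η + C * η := by
    rw [hsplit]
    set a1 := sInt (γi i j) (Icc 0 t) φ - sInt (γi i j) (Icc 0 T) (fun s => φ s * χ s)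
    set a2 := sInt (γi i j) (Icc 0 T) (fun s => φ s * χ s) -
      sInt (γ j) (Icc 0 T) (fun s => φ s * χ s)
    set a3 := sInt (γ j) (Icc 0 T) (fun s => φ s * χ s) - sInt (γ j) (Icc 0 t) φ
    have step : |a1 + a2 + a3| ≤ |a1| + |a2| + |a3| :=
      (abs_add_le _ _).trans (add_le_add_left (abs_add_le _ _) _)
    refine step.trans ?_
    exact add_le_add (add_le_add b1 hi1.le) b3
  have hfinal : C * (H + η) + η + C * η < ε := by
    have h1 : C * (H + η) ≤ C * (2 * η) :=
      mul_le_mul_of_nonneg_left (by linarith [hHle]) hCnn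
    have h2 : (3 * C + 1) * η < (3 * C + 2) * η := by nlinarith
    have h3 : (3 * C + 2) * η = ε := by
      rw [hηdef]
      field_simp
    nlinarith
  linarith [habs, hfinal]

end PrimConvAux

/-- **Convergence of primitives against continuous integrands from joint weak-*
convergence** (Lemma 2.7 (ii)). If (γ_i,|γ_i|) ⇀* (γ,λ), then outside an at most
countable set (the atoms of λ, except T), the integrals `∫_{[0,t]} Ψ·γ_i(ds)` converge
to `∫_{[0,t]} Ψ·γ(ds)` for every continuous matrix-valued Ψ. -/
theorem primitive_convergence_of_joint_weakStar
    (T : ℝ) (hT : 0 < T) (k : ℕ)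
    (γi : ℕ → Fin k → SignedMeasure ℝ) (γ : Fin k → SignedMeasure ℝ)
    -- measures on [0,T]
    (hsupp : ∀ i j, ∀ B : Set ℝ, MeasurableSet B → Disjoint B (Icc 0 T) → γi i j B = 0)
    (hsupp0 : ∀ j, ∀ B : Set ℝ, MeasurableSet B → Disjoint B (Icc 0 T) → γ j B = 0)
    -- (γ_i, |γ_i|) ⇀* (γ, λ)
    (lam : Measure ℝ) (hlamfin : IsFiniteMeasure lam)
    (hγconv : ∀ j, ∀ φ : ℝ → ℝ, ContinuousOn φ (Icc 0 T) →
      Tendsto (fun i => sInt (γi i j) (Icc 0 T) φ) atTop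
        (nhds (sInt (γ j) (Icc 0 T) φ)))
    (htvconv : ∀ φ : ℝ → ℝ, ContinuousOn φ (Icc 0 T) →
      Tendsto (fun i => ∫ t in Icc 0 T, φ t ∂(tvm (γi i))) atTop
        (nhds (∫ t in Icc 0 T, φ t ∂lam))) :
    ∃ E : Set ℝ, E ⊆ Icc 0 T ∧ T ∈ E ∧ (Icc 0 T \ E).Countable ∧
      -- ℰ can be taken to consist of T together with the non-atoms of λ in [0,T]
      E = insert T {t ∈ Icc 0 T | lam {t} = 0} ∧
      ∀ n : ℕ, 1 ≤ n → ∀ Ψ : ℝ → Matrix (Fin n) (Fin k) ℝ,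
        ContinuousOn Ψ (Icc 0 T) → ∀ t ∈ E, ∀ l : Fin n,
          Tendsto (fun i => ∑ j, sInt (γi i j) (Icc 0 t) (fun s => Ψ s l j)) atTop
            (nhds (∑ j, sInt (γ j) (Icc 0 t) (fun s => Ψ s l j))) := by
  haveI := hlamfin
  refine ⟨insert T {t ∈ Icc 0 T | lam {t} = 0}, ?_, mem_insert _ _, ?_, rfl, ?_⟩
  · exact insert_subset ⟨hT.le, le_rfl⟩ (sep_subset _ _)
  · have hsub : Icc 0 T \ insert T {t ∈ Icc 0 T | lam {t} = 0} ⊆ {x : ℝ | 0 < lam {x}} := by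
      intro x hx
      rcases hx with ⟨hx1, hx2⟩
      simp only [mem_insert_iff, mem_setOf_eq, not_or, mem_sep_iff, not_and] at hx2
      exact pos_iff_ne_zero.mpr (hx2.2 hx1)
    refine Countable.mono hsub ?_
    exact Measure.countable_meas_pos_of_disjoint_iUnion
      (μ := lam) (As := fun x : ℝ => {x})
      (fun x => measurableSet_singleton x)
      (fun x y hxy => by simpa [Function.onFun] using disjoint_singleton.mpr hxy)
  · intro n hn Ψ hΨ t ht l
    have htIcc : t ∈ Icc 0 T := by
      rcases ht with h | h
      · subst h; exact ⟨hT.le, le_rfl⟩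
      · exact h.1
    have hcase : t = T ∨ lam {t} = 0 := by
      rcases ht with h | h
      · exact Or.inl h
      · exact Or.inr h.2
    refine tendsto_finset_sum _ fun j _ => ?_
    have hφ : ContinuousOn (fun s => Ψ s l j) (Icc 0 T) := by
      have h1 : Continuous (fun M : Matrix (Fin n) (Fin k) ℝ => M l j) :=
        (continuous_apply j).comp (continuous_apply l)
      exact h1.comp_continuousOn hΨ
    exact PrimConvAux.conv_at hT hlamfin hγconv htvconv htIcc hcase j _ hφ

end
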